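/- For all 0 < ε < 1, for all 0 < γ₃ < γ₄ < γ₅ < γ₄ + ε(γ₄ − γ₃), for all sufficiently large integers r, and for all V > 0, there exists N₀ ∈ ℕ with the following property: for every N ≥ N₀ and every tree Γ of height N with H_r^{γ₄}(Γ) ≥ V in which every node has at most r^{γ₅} children, there exists a subtree Γ' of Γ such that every node Q of Γ' of height at least N₀ has (r^{γ₃}, 1−ε)-fertile ancestry in Γ'. -/

import Mathlib

universe u

/-- The data `(Γ, h, P)` is a tree of height `N`: there is exactly one node of height
`0` (the root), all heights are at most `N`, the parent of a non-root node lies in the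
tree one level up, and every node of height `< N` has a child (i.e. `P(Γ_n) = Γ_{n-1}`
for `1 ≤ n ≤ N`). -/
def IsTree {α : Type u} (N : ℕ) (Γ : Finset α) (h : α → ℕ) (P : α → α) : Prop :=
  (∃! q, q ∈ Γ ∧ h q = 0) ∧
  (∀ q ∈ Γ, h q ≤ N) ∧
  (∀ q ∈ Γ, h q ≠ 0 → P q ∈ Γ ∧ h (P q) = h q - 1) ∧
  (∀ q ∈ Γ, h q < N → ∃ p ∈ Γ, h p = h q + 1 ∧ P p = q)

/-- The children of a node `q`: the nodes of the tree whose parent is `q`. -/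
def children {α : Type u} [DecidableEq α] (Γ : Finset α) (h : α → ℕ) (P : α → α)
    (q : α) : Finset α :=
  Γ.filter fun p => h p ≠ 0 ∧ P p = q

/-- `C` is a cut of the tree `(Γ, h, P)` of height `N`: for every leaf `L`
(node of height `N`), some iterated parent of `L` (possibly `L` itself) lies in `C`. -/
def IsCut {α : Type u} (N : ℕ) (Γ : Finset α) (h : α → ℕ) (P : α → α)
    (C : Finset α) : Prop :=
  C ⊆ Γ ∧ ∀ L ∈ Γ, h L = N → ∃ k ≤ h L, P^[k] L ∈ C

/-- The `γ`-Hausdorff content of the tree `(Γ, h, P)` of height `N` with base `r`: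
the minimum over cuts `C` of `∑_{Q ∈ C} r^{-height(Q) γ}`. -/
noncomputable def treeContent {α : Type u} (N : ℕ) (Γ : Finset α) (h : α → ℕ)
    (P : α → α) (r : ℕ) (γ : ℝ) : ℝ :=
  sInf {v : ℝ | ∃ C : Finset α, IsCut N Γ h P C ∧
    v = ∑ q ∈ C, (r : ℝ) ^ (-(h q : ℝ) * γ)}

/-- The ancestry of a node `Q`: the set `{P^k(Q) : 1 ≤ k ≤ height Q}`. -/
def ancestry {α : Type u} [DecidableEq α] (h : α → ℕ) (P : α → α) (Q : α) : Finset α :=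
  (Finset.Icc 1 (h Q)).image fun k => P^[k] Q

/-- The `c`-fertile ancestors of `Q` in the tree with node set `Γ'`: those ancestors
having at least `c` children in `Γ'`. -/
noncomputable def fertileAnc {α : Type u} [DecidableEq α] (Γ' : Finset α) (h : α → ℕ)
    (P : α → α) (c : ℝ) (Q : α) : Finset α :=
  (ancestry h P Q).filter fun a => c ≤ ((children Γ' h P a).card : ℝ)

namespace SubtreeAux

open Finset

variable {α : Type u} [DecidableEq α]

lemma mem_children_iff {Γ : Finset α} {h : α → ℕ} {P : α → α} {q p : α} :
    p ∈ children Γ h P q ↔ p ∈ Γ ∧ h p ≠ 0 ∧ P p = q := by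
  simp [children]

lemma children_mono {Γ Γ' : Finset α} (hs : Γ ⊆ Γ') (h : α → ℕ) (P : α → α) (q : α) :
    children Γ h P q ⊆ children Γ' h P q :=
  Finset.filter_subset_filter _ hs

lemma height_of_child {N : ℕ} {Γ : Finset α} {h : α → ℕ} {P : α → α}
    (hT : IsTree N Γ h P) {q p : α} (hp : p ∈ children Γ h P q) : h p = h q + 1 := by
  rw [mem_children_iff] at hp
  have := (hT.2.2.1 p hp.1 hp.2.1).2
  rw [hp.2.2] at this
  omega

lemma iter_mem {N : ℕ} {Γ : Finset α} {h : α → ℕ} {P : α → α}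
    (hT : IsTree N Γ h P) {x : α} (hx : x ∈ Γ) :
    ∀ k, k ≤ h x → P^[k] x ∈ Γ ∧ h (P^[k] x) = h x - k := by
  intro k
  induction k with
  | zero => intro _; simpa using hx
  | succ k ih =>
    intro hk
    have hk' : k ≤ h x := by omega
    obtain ⟨hmem, hht⟩ := ih hk'
    have hne : h (P^[k] x) ≠ 0 := by omega
    have := hT.2.2.1 _ hmem hne
    rw [Function.iterate_succ_apply']
    exact ⟨this.1, by omega⟩

variable (Γ : Finset α) (h : α → ℕ) (P : α → α) (r : ℕ) (γ₄ : ℝ)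

/-- Relative Hausdorff content of the subtree below a node, by downward recursion
(fuel = distance to the leaf level). -/
noncomputable def Hc : ℕ → α → ℝ
  | 0, _ => 1
  | m + 1, q => min 1 ((r : ℝ) ^ (-γ₄) * ∑ c ∈ children Γ h P q, Hc m c)

lemma Hc_nonneg (hr : 0 < r) : ∀ m (q : α), 0 ≤ Hc Γ h P r γ₄ m q := by
  intro m
  induction m with
  | zero => intro q; simp [Hc]
  | succ m ih =>
    intro q
    have : (0:ℝ) ≤ (r : ℝ) ^ (-γ₄) * ∑ c ∈ children Γ h P q, Hc Γ h P r γ₄ m c := by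
      apply mul_nonneg (Real.rpow_nonneg (by positivity) _)
      exact Finset.sum_nonneg fun c _ => ih c
    simp only [Hc]
    exact le_min zero_le_one this

lemma Hc_le_one : ∀ m (q : α), Hc Γ h P r γ₄ m q ≤ 1 := by
  intro m q
  cases m with
  | zero => simp [Hc]
  | succ m => simp only [Hc]; exact min_le_left _ _

/-- A near-optimal cut below a node, recursively. -/
noncomputable def cutOf : ℕ → α → Finset α
  | 0, q => {q}
  | m + 1, q =>
      if (1:ℝ) ≤ (r : ℝ) ^ (-γ₄) * ∑ c ∈ children Γ h P q, Hc Γ h P r γ₄ m c then {q}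
      else (children Γ h P q).biUnion (cutOf m)

lemma cutOf_subset : ∀ m (q : α), q ∈ Γ → cutOf Γ h P r γ₄ m q ⊆ Γ := by
  intro m
  induction m with
  | zero => intro q hq; simpa [cutOf] using hq
  | succ m ih =>
    intro q hq
    simp only [cutOf]
    split
    · simpa using hq
    · intro x hx
      rw [Finset.mem_biUnion] at hx
      obtain ⟨c, hc, hxc⟩ := hx
      exact ih c (mem_children_iff.mp hc).1 hxc

lemma sum_biUnion_le {β : Type*} [DecidableEq α] {s : Finset β} {f : β → Finset α}
    {g : α → ℝ} (hg : ∀ a, 0 ≤ g a) :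
    ∑ x ∈ s.biUnion f, g x ≤ ∑ b ∈ s, ∑ x ∈ f b, g x := by
  classical
  induction s using Finset.induction with
  | empty => simp
  | insert _ _ hnot ih =>
    rename_i a s
    rw [Finset.biUnion_insert, Finset.sum_insert hnot]
    calc ∑ x ∈ f a ∪ s.biUnion f, g x
        ≤ ∑ x ∈ f a, g x + ∑ x ∈ s.biUnion f, g x := by
          rw [← Finset.union_sdiff_self_eq_union, Finset.sum_union Finset.disjoint_sdiff]
          exact add_le_add_right
            (Finset.sum_le_sum_of_subset_of_nonneg Finset.sdiff_subset
              (fun x _ _ => hg x)) _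
      _ ≤ ∑ x ∈ f a, g x + ∑ b ∈ s, ∑ x ∈ f b, g x := by linarith [ih]

end SubtreeAux

namespace SubtreeAux
open Finset
set_option linter.unusedSectionVars false

variable {α : Type u} [DecidableEq α]

lemma cut_sum {N : ℕ} {Γ : Finset α} {h : α → ℕ} {P : α → α}
    (hT : IsTree N Γ h P) {r : ℕ} (hr : 0 < r) (γ₄ : ℝ) :
    ∀ m, ∀ q ∈ Γ, h q + m = N →
      (∑ x ∈ cutOf Γ h P r γ₄ m q, (r : ℝ) ^ (-(h x : ℝ) * γ₄))
        ≤ (r : ℝ) ^ (-(h q : ℝ) * γ₄) * Hc Γ h P r γ₄ m q := by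
  have hrpos : (0:ℝ) < (r:ℝ) := by exact_mod_cast hr
  intro m
  induction m with
  | zero => intro q hq hh; simp [cutOf, Hc]
  | succ m ih =>
    intro q hq hh
    simp only [cutOf, Hc]
    split
    · rename_i hcase
      rw [min_eq_left hcase]
      simp
    · rename_i hcase
      rw [min_eq_right (le_of_lt (not_le.mp hcase))]
      calc ∑ x ∈ (children Γ h P q).biUnion (cutOf Γ h P r γ₄ m), (r:ℝ) ^ (-(h x:ℝ) * γ₄)
          ≤ ∑ c ∈ children Γ h P q, ∑ x ∈ cutOf Γ h P r γ₄ m c, (r:ℝ) ^ (-(h x:ℝ) * γ₄) :=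
            sum_biUnion_le (fun a => Real.rpow_nonneg hrpos.le _)
        _ ≤ ∑ c ∈ children Γ h P q, (r:ℝ) ^ (-(h c:ℝ) * γ₄) * Hc Γ h P r γ₄ m c := by
            apply Finset.sum_le_sum
            intro c hc
            exact ih c (mem_children_iff.mp hc).1 (by have := height_of_child hT hc; omega)
        _ = ∑ c ∈ children Γ h P q, (r:ℝ) ^ (-(h q:ℝ) * γ₄) * ((r:ℝ) ^ (-γ₄) * Hc Γ h P r γ₄ m c) := by
            apply Finset.sum_congr rfl
            intro c hc
            have hhc : (h c : ℝ) = (h q : ℝ) + 1 := by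
              have := height_of_child hT hc; rw [this]; push_cast; ring
            rw [hhc, ← mul_assoc, ← Real.rpow_add hrpos]
            ring_nf
        _ = (r:ℝ) ^ (-(h q:ℝ) * γ₄) * ((r:ℝ) ^ (-γ₄) * ∑ c ∈ children Γ h P q, Hc Γ h P r γ₄ m c) := by
            rw [Finset.mul_sum, Finset.mul_sum]

lemma cut_hits {N : ℕ} {Γ : Finset α} {h : α → ℕ} {P : α → α}
    (hT : IsTree N Γ h P) (r : ℕ) (γ₄ : ℝ) :
    ∀ m, ∀ q ∈ Γ, h q + m = N → ∀ L ∈ Γ, h L = N → P^[m] L = q →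
      ∃ k ≤ N, P^[k] L ∈ cutOf Γ h P r γ₄ m q := by
  intro m
  induction m with
  | zero =>
    intro q hq hh L hL hLN hPL
    exact ⟨0, Nat.zero_le _, by simp [cutOf, ← hPL]⟩
  | succ m ih =>
    intro q hq hh L hL hLN hPL
    simp only [cutOf]
    split
    · exact ⟨m + 1, by omega, by simp [hPL]⟩
    · set c := P^[m] L with hc
      have hmem : c ∈ Γ ∧ h c = h L - m := iter_mem hT hL m (by omega)
      have hcc : c ∈ children Γ h P q := by
        rw [mem_children_iff]
        refine ⟨hmem.1, by omega, ?_⟩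
        rw [← hPL, Function.iterate_succ_apply']
      obtain ⟨k, hk, hkmem⟩ := ih c hmem.1 (by omega) L hL hLN rfl
      exact ⟨k, hk, Finset.mem_biUnion.mpr ⟨c, hcc, hkmem⟩⟩

lemma content_le_Hc {N : ℕ} {Γ : Finset α} {h : α → ℕ} {P : α → α}
    (hT : IsTree N Γ h P) {r : ℕ} (hr : 0 < r) (γ₄ : ℝ)
    {q₀ : α} (hq₀ : q₀ ∈ Γ) (hq₀0 : h q₀ = 0) :
    treeContent N Γ h P r γ₄ ≤ Hc Γ h P r γ₄ N q₀ := by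
  have hrpos : (0:ℝ) < (r:ℝ) := by exact_mod_cast hr
  have hcut : IsCut N Γ h P (cutOf Γ h P r γ₄ N q₀) := by
    constructor
    · exact cutOf_subset Γ h P r γ₄ N q₀ hq₀
    · intro L hL hLN
      have hroot : P^[N] L = q₀ := by
        have hmem : P^[N] L ∈ Γ ∧ h (P^[N] L) = h L - N := iter_mem hT hL N (by omega)
        obtain ⟨u, hu, huniq⟩ := hT.1
        have h1 : P^[N] L = u := huniq _ ⟨hmem.1, by omega⟩
        have h2 : q₀ = u := huniq _ ⟨hq₀, hq₀0⟩
        rw [h1, h2]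
      obtain ⟨k, hk, hkmem⟩ := cut_hits hT r γ₄ N q₀ hq₀ (by omega) L hL hLN hroot
      exact ⟨k, by omega, hkmem⟩
  have hmem : (∑ x ∈ cutOf Γ h P r γ₄ N q₀, (r : ℝ) ^ (-(h x : ℝ) * γ₄)) ∈
      {v : ℝ | ∃ C : Finset α, IsCut N Γ h P C ∧
        v = ∑ q ∈ C, (r : ℝ) ^ (-(h q : ℝ) * γ₄)} := ⟨_, hcut, rfl⟩
  have hbdd : BddBelow {v : ℝ | ∃ C : Finset α, IsCut N Γ h P C ∧
      v = ∑ q ∈ C, (r : ℝ) ^ (-(h q : ℝ) * γ₄)} := by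
    refine ⟨0, fun v hv => ?_⟩
    obtain ⟨C, _, rfl⟩ := hv
    exact Finset.sum_nonneg fun x _ => Real.rpow_nonneg hrpos.le _
  calc treeContent N Γ h P r γ₄ ≤ _ := csInf_le hbdd hmem
    _ ≤ (r:ℝ) ^ (-(h q₀:ℝ) * γ₄) * Hc Γ h P r γ₄ N q₀ := cut_sum hT hr γ₄ N q₀ hq₀ (by omega)
    _ = Hc Γ h P r γ₄ N q₀ := by rw [hq₀0]; simp

end SubtreeAux

namespace SubtreeAux
open Finset
set_option linter.unusedSectionVars false

variable {α : Type u} [DecidableEq α]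

variable (Γ : Finset α) (h : α → ℕ) (P : α → α) (r : ℕ) (γ₃ γ₄ γ₅ : ℝ)

/-- Children with large relative content. -/
noncomputable def Tset (m : ℕ) (q : α) : Finset α :=
  (children Γ h P q).filter fun c =>
    (r : ℝ) ^ (γ₄ - γ₅) / 2 * Hc Γ h P r γ₄ (m + 1) q ≤ Hc Γ h P r γ₄ m c

/-- Children maximizing the relative content. -/
noncomputable def Mset (m : ℕ) (q : α) : Finset α :=
  (children Γ h P q).filter fun c =>
    ∀ c' ∈ children Γ h P q, Hc Γ h P r γ₄ m c' ≤ Hc Γ h P r γ₄ m c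

noncomputable def chosen (m : ℕ) (q : α) : Finset α :=
  if (r : ℝ) ^ γ₃ ≤ ((Tset Γ h P r γ₄ γ₅ m q).card : ℝ) then Tset Γ h P r γ₄ γ₅ m q
  else Mset Γ h P r γ₄ m q

noncomputable def keep : ℕ → α → Finset α
  | 0, q => {q}
  | m + 1, q => insert q ((chosen Γ h P r γ₃ γ₄ γ₅ m q).biUnion (keep m))

lemma chosen_subset_children (m : ℕ) (q : α) :
    chosen Γ h P r γ₃ γ₄ γ₅ m q ⊆ children Γ h P q := by
  unfold chosen
  split
  · exact Finset.filter_subset _ _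
  · exact Finset.filter_subset _ _

lemma self_mem_keep (m : ℕ) (q : α) : q ∈ keep Γ h P r γ₃ γ₄ γ₅ m q := by
  cases m with
  | zero => simp [keep]
  | succ m => simp [keep]

lemma keep_sub_mem {m : ℕ} {q c x : α} (hc : c ∈ chosen Γ h P r γ₃ γ₄ γ₅ m q)
    (hx : x ∈ keep Γ h P r γ₃ γ₄ γ₅ m c) : x ∈ keep Γ h P r γ₃ γ₄ γ₅ (m + 1) q := by
  simp only [keep, Finset.mem_insert]
  exact Or.inr (Finset.mem_biUnion.mpr ⟨c, hc, hx⟩)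

lemma mem_keep_succ {m : ℕ} {q x : α} (hx : x ∈ keep Γ h P r γ₃ γ₄ γ₅ (m + 1) q) :
    x = q ∨ ∃ c ∈ chosen Γ h P r γ₃ γ₄ γ₅ m q, x ∈ keep Γ h P r γ₃ γ₄ γ₅ m c := by
  simp only [keep, Finset.mem_insert, Finset.mem_biUnion] at hx
  exact hx

section Bounds

variable {N : ℕ} (hT : IsTree N Γ h P) {r}

/-- Lower bound on the sum of contents of children in `Tset`. -/
lemma sum_Tset_ge (hr : 0 < r)
    {q : α} (hq : q ∈ Γ) (hcardq : ((children Γ h P q).card : ℝ) ≤ (r : ℝ) ^ γ₅)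
    (m : ℕ) :
    (r : ℝ) ^ γ₄ * Hc Γ h P r γ₄ (m + 1) q / 2 ≤
      ∑ c ∈ Tset Γ h P r γ₄ γ₅ m q, Hc Γ h P r γ₄ m c := by
  have hrpos : (0:ℝ) < (r:ℝ) := by exact_mod_cast hr
  set Hq := Hc Γ h P r γ₄ (m + 1) q with hHq
  have hHqnn : 0 ≤ Hq := Hc_nonneg Γ h P r γ₄ hr _ _
  have hS : (r : ℝ) ^ γ₄ * Hq ≤ ∑ c ∈ children Γ h P q, Hc Γ h P r γ₄ m c := by
    have : Hq ≤ (r : ℝ) ^ (-γ₄) * ∑ c ∈ children Γ h P q, Hc Γ h P r γ₄ m c :=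
      min_le_right _ _
    calc (r : ℝ) ^ γ₄ * Hq
        ≤ (r : ℝ) ^ γ₄ * ((r : ℝ) ^ (-γ₄) * ∑ c ∈ children Γ h P q, Hc Γ h P r γ₄ m c) := by
          apply mul_le_mul_of_nonneg_left this (Real.rpow_nonneg hrpos.le _)
      _ = _ := by rw [← mul_assoc, ← Real.rpow_add hrpos]; simp
  have hsplit : ∑ c ∈ children Γ h P q, Hc Γ h P r γ₄ m c =
      (∑ c ∈ Tset Γ h P r γ₄ γ₅ m q, Hc Γ h P r γ₄ m c) +
      ∑ c ∈ (children Γ h P q).filter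
        (fun c => ¬ ((r : ℝ) ^ (γ₄ - γ₅) / 2 * Hq ≤ Hc Γ h P r γ₄ m c)),
        Hc Γ h P r γ₄ m c := by
    rw [Tset, hHq]
    exact (Finset.sum_filter_add_sum_filter_not _ _ _).symm
  have hcard2 : ((((children Γ h P q).filter
        (fun c => ¬ ((r : ℝ) ^ (γ₄ - γ₅) / 2 * Hq ≤ Hc Γ h P r γ₄ m c))).card : ℝ))
        ≤ (r : ℝ) ^ γ₅ := by
    refine le_trans ?_ hcardq
    exact_mod_cast Finset.card_le_card (Finset.filter_subset _ _)
  have hrest : ∑ c ∈ (children Γ h P q).filter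
        (fun c => ¬ ((r : ℝ) ^ (γ₄ - γ₅) / 2 * Hq ≤ Hc Γ h P r γ₄ m c)),
        Hc Γ h P r γ₄ m c ≤ (r : ℝ) ^ γ₅ * ((r : ℝ) ^ (γ₄ - γ₅) / 2 * Hq) := by
    have h1 := Finset.sum_le_card_nsmul ((children Γ h P q).filter
        (fun c => ¬ ((r : ℝ) ^ (γ₄ - γ₅) / 2 * Hq ≤ Hc Γ h P r γ₄ m c)))
        (fun c => Hc Γ h P r γ₄ m c) ((r : ℝ) ^ (γ₄ - γ₅) / 2 * Hq)
        (fun c hc => le_of_lt (not_le.mp (Finset.mem_filter.mp hc).2))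
    rw [nsmul_eq_mul] at h1
    refine h1.trans ?_
    apply mul_le_mul_of_nonneg_right hcard2 (by positivity)
  have hmul : (r : ℝ) ^ γ₅ * (r : ℝ) ^ (γ₄ - γ₅) = (r : ℝ) ^ γ₄ := by
    rw [← Real.rpow_add hrpos]; norm_num
  have hkey : (r : ℝ) ^ γ₅ * ((r : ℝ) ^ (γ₄ - γ₅) / 2 * Hq) = (r : ℝ) ^ γ₄ * Hq / 2 := by
    linear_combination (Hq / 2) * hmul
  rw [hkey] at hrest
  linarith [hsplit ▸ hS]

end Bounds
end SubtreeAux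

namespace SubtreeAux
open Finset
set_option linter.unusedSectionVars false
set_option maxHeartbeats 1000000

variable {α : Type u} [DecidableEq α]

lemma chosen_nonempty {N : ℕ} {Γ : Finset α} {h : α → ℕ} {P : α → α}
    (hT : IsTree N Γ h P) {r : ℕ} (hr : 0 < r) {γ₃ γ₄ γ₅ : ℝ} (hγ₃ : 0 ≤ γ₃)
    {q : α} (hq : q ∈ Γ) (hqN : h q < N) (m : ℕ) :
    (chosen Γ h P r γ₃ γ₄ γ₅ m q).Nonempty := by
  have hr1 : (1:ℝ) ≤ (r:ℝ) := by exact_mod_cast hr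
  unfold chosen
  split
  · rename_i hA
    rw [← Finset.card_pos]
    have h1 : (1:ℝ) ≤ (r:ℝ) ^ γ₃ := Real.one_le_rpow hr1 hγ₃
    have h2 : (0:ℝ) < ((Tset Γ h P r γ₄ γ₅ m q).card : ℝ) := lt_of_lt_of_le (by linarith) hA
    exact_mod_cast h2
  · obtain ⟨p, hp, hp1, hp2⟩ := hT.2.2.2 q hq hqN
    have hpch : p ∈ children Γ h P q := mem_children_iff.mpr ⟨hp, by omega, hp2⟩
    obtain ⟨b, hb, hbmax⟩ := Finset.exists_max_image (children Γ h P q)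
      (fun c => Hc Γ h P r γ₄ m c) ⟨p, hpch⟩
    exact ⟨b, Finset.mem_filter.mpr ⟨hb, hbmax⟩⟩

lemma chosen_cases {N : ℕ} {Γ : Finset α} {h : α → ℕ} {P : α → α}
    (hT : IsTree N Γ h P) {r : ℕ} (hr : 0 < r) {γ₃ γ₄ γ₅ : ℝ}
    {q : α} (hq : q ∈ Γ) (hcardq : ((children Γ h P q).card : ℝ) ≤ (r : ℝ) ^ γ₅)
    (m : ℕ) :
    ((r : ℝ) ^ γ₃ ≤ ((chosen Γ h P r γ₃ γ₄ γ₅ m q).card : ℝ) ∧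
      ∀ c ∈ chosen Γ h P r γ₃ γ₄ γ₅ m q,
        (r : ℝ) ^ (γ₄ - γ₅) / 2 * Hc Γ h P r γ₄ (m + 1) q ≤ Hc Γ h P r γ₄ m c) ∨
    (∀ c ∈ chosen Γ h P r γ₃ γ₄ γ₅ m q,
        (r : ℝ) ^ (γ₄ - γ₃) / 2 * Hc Γ h P r γ₄ (m + 1) q ≤ Hc Γ h P r γ₄ m c) := by
  have hrpos : (0:ℝ) < (r:ℝ) := by exact_mod_cast hr
  unfold chosen
  split
  · rename_i hA
    left
    refine ⟨hA, fun c hc => ?_⟩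
    exact (Finset.mem_filter.mp hc).2
  · rename_i hB
    right
    intro c hc
    rw [Mset, Finset.mem_filter] at hc
    obtain ⟨hcch, hcmax⟩ := hc
    have hc3pos : (0:ℝ) < (r:ℝ) ^ γ₃ := Real.rpow_pos_of_pos hrpos _
    have hHcnn : 0 ≤ Hc Γ h P r γ₄ m c := Hc_nonneg Γ h P r γ₄ hr _ _
    have hsum := sum_Tset_ge Γ h P γ₄ γ₅ hr hq hcardq m
    have hTle : ∑ t ∈ Tset Γ h P r γ₄ γ₅ m q, Hc Γ h P r γ₄ m t ≤
        ((Tset Γ h P r γ₄ γ₅ m q).card : ℝ) * Hc Γ h P r γ₄ m c := by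
      have := Finset.sum_le_card_nsmul (Tset Γ h P r γ₄ γ₅ m q)
        (fun t => Hc Γ h P r γ₄ m t) (Hc Γ h P r γ₄ m c)
        (fun t ht => hcmax t (Finset.mem_filter.mp ht).1)
      rwa [nsmul_eq_mul] at this
    have hTcard : ((Tset Γ h P r γ₄ γ₅ m q).card : ℝ) ≤ (r : ℝ) ^ γ₃ :=
      (not_le.mp hB).le
    have h2 : (r:ℝ) ^ γ₄ * Hc Γ h P r γ₄ (m + 1) q / 2 ≤
        (r:ℝ) ^ γ₃ * Hc Γ h P r γ₄ m c := by
      have h3 : ((Tset Γ h P r γ₄ γ₅ m q).card : ℝ) * Hc Γ h P r γ₄ m c ≤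
          (r:ℝ) ^ γ₃ * Hc Γ h P r γ₄ m c :=
        mul_le_mul_of_nonneg_right hTcard hHcnn
      linarith
    have h4 : (r:ℝ) ^ γ₄ * Hc Γ h P r γ₄ (m + 1) q / 2 / (r:ℝ) ^ γ₃ ≤
        Hc Γ h P r γ₄ m c := (div_le_iff₀ hc3pos).mpr (by linarith)
    rw [Real.rpow_sub hrpos]
    have heq : (r:ℝ) ^ γ₄ / (r:ℝ) ^ γ₃ / 2 * Hc Γ h P r γ₄ (m + 1) q =
        (r:ℝ) ^ γ₄ * Hc Γ h P r γ₄ (m + 1) q / 2 / (r:ℝ) ^ γ₃ := by ring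
    rw [heq]
    exact h4

end SubtreeAux

namespace SubtreeAux
open Finset
set_option linter.unusedSectionVars false
set_option linter.unusedVariables false
set_option maxHeartbeats 2000000

variable {α : Type u} [DecidableEq α]

lemma Icc_one_succ (n : ℕ) : Finset.Icc 1 (n + 1) = insert (n + 1) (Finset.Icc 1 n) := by
  ext k
  simp only [Finset.mem_Icc, Finset.mem_insert]
  omega

lemma keep_main {N : ℕ} {Γ : Finset α} {h : α → ℕ} {P : α → α} (hT : IsTree N Γ h P)
    {r : ℕ} (hr : 0 < r) {γ₃ γ₄ γ₅ : ℝ} (hγ₃ : 0 ≤ γ₃)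
    (hcard : ∀ q ∈ Γ, ((children Γ h P q).card : ℝ) ≤ (r : ℝ) ^ γ₅) :
    ∀ m, ∀ q ∈ Γ, h q + m = N →
      (∀ x ∈ keep Γ h P r γ₃ γ₄ γ₅ m q, x ∈ Γ ∧ h q ≤ h x ∧ P^[h x - h q] x = q) ∧
      (∀ x ∈ keep Γ h P r γ₃ γ₄ γ₅ m q, x ≠ q → P x ∈ keep Γ h P r γ₃ γ₄ γ₅ m q) ∧
      (∀ x ∈ keep Γ h P r γ₃ γ₄ γ₅ m q, h x < N →
        ∃ p ∈ keep Γ h P r γ₃ γ₄ γ₅ m q, h p = h x + 1 ∧ P p = x) ∧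
      (∀ x ∈ keep Γ h P r γ₃ γ₄ γ₅ m q, ∃ F I : ℕ, F + I = h x - h q ∧
        Hc Γ h P r γ₄ m q * ((r:ℝ) ^ (γ₄ - γ₅) / 2) ^ F * ((r:ℝ) ^ (γ₄ - γ₃) / 2) ^ I ≤
          Hc Γ h P r γ₄ (N - h x) x ∧
        ((Finset.Icc 1 (h x - h q)).filter fun k =>
           ¬ ((r:ℝ) ^ γ₃ ≤ ((children (keep Γ h P r γ₃ γ₄ γ₅ m q) h P (P^[k] x)).card : ℝ))).card
          ≤ I) := by
  have hrpos : (0:ℝ) < (r:ℝ) := by exact_mod_cast hr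
  intro m
  induction m with
  | zero =>
    intro q hq hh
    have hk : keep Γ h P r γ₃ γ₄ γ₅ 0 q = {q} := rfl
    rw [hk]
    refine ⟨?_, ?_, ?_, ?_⟩
    · intro x hx
      rw [Finset.mem_singleton] at hx
      subst hx
      exact ⟨hq, le_refl _, by simp⟩
    · intro x hx hne
      rw [Finset.mem_singleton] at hx
      exact absurd hx hne
    · intro x hx hxN
      rw [Finset.mem_singleton] at hx
      subst hx
      omega
    · intro x hx
      rw [Finset.mem_singleton] at hx
      subst hx
      refine ⟨0, 0, by omega, ?_, ?_⟩
      · have : N - h x = 0 := by omega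
        rw [this]
        simp
      · simp
  | succ m ih =>
    intro q hq hh
    -- facts about chosen children
    have hch : ∀ c ∈ chosen Γ h P r γ₃ γ₄ γ₅ m q,
        c ∈ Γ ∧ h c = h q + 1 ∧ P c = q ∧ h c + m = N := by
      intro c hc
      have hc' := chosen_subset_children Γ h P r γ₃ γ₄ γ₅ m q hc
      have h1 := height_of_child hT hc'
      have h2 := mem_children_iff.mp hc'
      exact ⟨h2.1, h1, h2.2.2, by omega⟩
    refine ⟨?_, ?_, ?_, ?_⟩
    · -- membership / chain
      intro x hx
      rcases mem_keep_succ Γ h P r γ₃ γ₄ γ₅ hx with rfl | ⟨c, hc, hxc⟩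
      · exact ⟨hq, le_refl _, by simp⟩
      · obtain ⟨hcΓ, hch1, hcP, hcm⟩ := hch c hc
        obtain ⟨hxΓ, hhx, hiter⟩ := (ih c hcΓ hcm).1 x hxc
        refine ⟨hxΓ, by omega, ?_⟩
        have hstep : h x - h q = (h x - h c) + 1 := by omega
        rw [hstep, Function.iterate_succ_apply', hiter, hcP]
    · -- parent closed
      intro x hx hne
      rcases mem_keep_succ Γ h P r γ₃ γ₄ γ₅ hx with rfl | ⟨c, hc, hxc⟩
      · exact absurd rfl hne
      · by_cases hxc' : x = c
        · subst hxc'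
          obtain ⟨_, _, hcP, _⟩ := hch x hc
          rw [hcP]
          exact self_mem_keep Γ h P r γ₃ γ₄ γ₅ _ q
        · obtain ⟨hcΓ, _, _, hcm⟩ := hch c hc
          exact keep_sub_mem Γ h P r γ₃ γ₄ γ₅ hc ((ih c hcΓ hcm).2.1 x hxc hxc')
    · -- child existence
      intro x hx hxN
      rcases mem_keep_succ Γ h P r γ₃ γ₄ γ₅ hx with rfl | ⟨c, hc, hxc⟩
      · obtain ⟨c, hc⟩ := chosen_nonempty hT hr hγ₃ hq (by omega) m
        obtain ⟨_, hch1, hcP, _⟩ := hch c hc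
        exact ⟨c, keep_sub_mem Γ h P r γ₃ γ₄ γ₅ hc (self_mem_keep Γ h P r γ₃ γ₄ γ₅ m c),
          hch1, hcP⟩
      · obtain ⟨hcΓ, _, _, hcm⟩ := hch c hc
        obtain ⟨p, hp, hp1, hp2⟩ := (ih c hcΓ hcm).2.2.1 x hxc hxN
        exact ⟨p, keep_sub_mem Γ h P r γ₃ γ₄ γ₅ hc hp, hp1, hp2⟩
    · -- the content / fertility invariant
      intro x hx
      rcases mem_keep_succ Γ h P r γ₃ γ₄ γ₅ hx with rfl | ⟨c, hc, hxc⟩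
      · refine ⟨0, 0, by omega, ?_, ?_⟩
        · have : N - h x = m + 1 := by omega
          rw [this]
          simp
        · simp
      · obtain ⟨hcΓ, hch1, hcP, hcm⟩ := hch c hc
        obtain ⟨hxΓ, hhx, hiter⟩ := (ih c hcΓ hcm).1 x hxc
        obtain ⟨F, I, hFI, hHc, hcount⟩ := (ih c hcΓ hcm).2.2.2 x hxc
        have hsub : keep Γ h P r γ₃ γ₄ γ₅ m c ⊆ keep Γ h P r γ₃ γ₄ γ₅ (m+1) q :=
          fun y hy => keep_sub_mem Γ h P r γ₃ γ₄ γ₅ hc hy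
        have hstep : h x - h q = (h x - h c) + 1 := by omega
        have hiterq : P^[h x - h q] x = q := by
          rw [hstep, Function.iterate_succ_apply', hiter, hcP]
        -- monotonicity of the bad-index set over the common range
        have hmono : ((Finset.Icc 1 (h x - h c)).filter fun k =>
              ¬ ((r:ℝ) ^ γ₃ ≤
                ((children (keep Γ h P r γ₃ γ₄ γ₅ (m+1) q) h P (P^[k] x)).card : ℝ))).card
            ≤ I := by
          refine le_trans (Finset.card_le_card
            (Finset.monotone_filter_right _ ?_)) hcount
          intro k _ hk
          intro hcon
          apply hk
          refine le_trans hcon ?_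
          exact_mod_cast Finset.card_le_card (children_mono hsub h P _)
        have hA0 : (0:ℝ) ≤ (r:ℝ) ^ (γ₄ - γ₅) / 2 := by positivity
        have hB0 : (0:ℝ) ≤ (r:ℝ) ^ (γ₄ - γ₃) / 2 := by positivity
        have hpow0 : (0:ℝ) ≤ ((r:ℝ) ^ (γ₄ - γ₅) / 2) ^ F * ((r:ℝ) ^ (γ₄ - γ₃) / 2) ^ I := by
          positivity
        rcases chosen_cases hT hr hq (hcard q hq) m with ⟨hfert, hbound⟩ | hbound
        · -- fertile (case A)
          refine ⟨F + 1, I, by omega, ?_, ?_⟩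
          · have h1 : ((r:ℝ) ^ (γ₄ - γ₅) / 2 * Hc Γ h P r γ₄ (m+1) q) *
                (((r:ℝ) ^ (γ₄ - γ₅) / 2) ^ F * ((r:ℝ) ^ (γ₄ - γ₃) / 2) ^ I) ≤
                Hc Γ h P r γ₄ m c *
                (((r:ℝ) ^ (γ₄ - γ₅) / 2) ^ F * ((r:ℝ) ^ (γ₄ - γ₃) / 2) ^ I) :=
              mul_le_mul_of_nonneg_right (hbound c hc) hpow0
            calc Hc Γ h P r γ₄ (m+1) q * ((r:ℝ) ^ (γ₄ - γ₅) / 2) ^ (F+1) *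
                  ((r:ℝ) ^ (γ₄ - γ₃) / 2) ^ I
                = ((r:ℝ) ^ (γ₄ - γ₅) / 2 * Hc Γ h P r γ₄ (m+1) q) *
                  (((r:ℝ) ^ (γ₄ - γ₅) / 2) ^ F * ((r:ℝ) ^ (γ₄ - γ₃) / 2) ^ I) := by ring
              _ ≤ Hc Γ h P r γ₄ m c *
                  (((r:ℝ) ^ (γ₄ - γ₅) / 2) ^ F * ((r:ℝ) ^ (γ₄ - γ₃) / 2) ^ I) := h1
              _ = Hc Γ h P r γ₄ m c * ((r:ℝ) ^ (γ₄ - γ₅) / 2) ^ F *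
                  ((r:ℝ) ^ (γ₄ - γ₃) / 2) ^ I := by ring
              _ ≤ Hc Γ h P r γ₄ (N - h x) x := hHc
          · -- q itself is fertile in keep (m+1) q
            have hqfert : (r:ℝ) ^ γ₃ ≤
                ((children (keep Γ h P r γ₃ γ₄ γ₅ (m+1) q) h P q).card : ℝ) := by
              refine le_trans hfert ?_
              have hsubch : chosen Γ h P r γ₃ γ₄ γ₅ m q ⊆
                  children (keep Γ h P r γ₃ γ₄ γ₅ (m+1) q) h P q := by
                intro t ht
                obtain ⟨_, hth, htP, _⟩ := hch t ht
                refine mem_children_iff.mpr ⟨?_, by omega, htP⟩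
                exact keep_sub_mem Γ h P r γ₃ γ₄ γ₅ ht (self_mem_keep Γ h P r γ₃ γ₄ γ₅ m t)
              exact_mod_cast Finset.card_le_card hsubch
            rw [hstep, Icc_one_succ, Finset.filter_insert]
            rw [if_neg]
            · exact hmono
            · push_neg
              have : P^[h x - h c + 1] x = q := by rw [← hstep]; exact hiterq
              rw [this]
              exact hqfert
        · -- infertile (case B)
          refine ⟨F, I + 1, by omega, ?_, ?_⟩
          · have h1 : ((r:ℝ) ^ (γ₄ - γ₃) / 2 * Hc Γ h P r γ₄ (m+1) q) *
                (((r:ℝ) ^ (γ₄ - γ₅) / 2) ^ F * ((r:ℝ) ^ (γ₄ - γ₃) / 2) ^ I) ≤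
                Hc Γ h P r γ₄ m c *
                (((r:ℝ) ^ (γ₄ - γ₅) / 2) ^ F * ((r:ℝ) ^ (γ₄ - γ₃) / 2) ^ I) :=
              mul_le_mul_of_nonneg_right (hbound c hc) hpow0
            calc Hc Γ h P r γ₄ (m+1) q * ((r:ℝ) ^ (γ₄ - γ₅) / 2) ^ F *
                  ((r:ℝ) ^ (γ₄ - γ₃) / 2) ^ (I+1)
                = ((r:ℝ) ^ (γ₄ - γ₃) / 2 * Hc Γ h P r γ₄ (m+1) q) *
                  (((r:ℝ) ^ (γ₄ - γ₅) / 2) ^ F * ((r:ℝ) ^ (γ₄ - γ₃) / 2) ^ I) := by ring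
              _ ≤ Hc Γ h P r γ₄ m c *
                  (((r:ℝ) ^ (γ₄ - γ₅) / 2) ^ F * ((r:ℝ) ^ (γ₄ - γ₃) / 2) ^ I) := h1
              _ = Hc Γ h P r γ₄ m c * ((r:ℝ) ^ (γ₄ - γ₅) / 2) ^ F *
                  ((r:ℝ) ^ (γ₄ - γ₃) / 2) ^ I := by ring
              _ ≤ Hc Γ h P r γ₄ (N - h x) x := hHc
          · rw [hstep, Icc_one_succ, Finset.filter_insert]
            split
            · refine le_trans (Finset.card_insert_le _ _) ?_
              omega
            · omega


end SubtreeAux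

set_option maxHeartbeats 2000000 in
theorem subtree_regularity :
    ∀ ε : ℝ, 0 < ε → ε < 1 →
    ∀ γ₃ γ₄ γ₅ : ℝ, 0 < γ₃ → γ₃ < γ₄ → γ₄ < γ₅ → γ₅ < γ₄ + ε * (γ₄ - γ₃) →
    ∃ r₀ : ℕ, ∀ r : ℕ, r₀ ≤ r →
    ∀ V : ℝ, 0 < V →
    ∃ N₀ : ℕ, ∀ N : ℕ, N₀ ≤ N →
    ∀ (α : Type u) [inst : DecidableEq α],
    ∀ (Γ : Finset α) (h : α → ℕ) (P : α → α),
      IsTree N Γ h P → V ≤ treeContent N Γ h P r γ₄ →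
      (∀ q ∈ Γ, ((children Γ h P q).card : ℝ) ≤ (r : ℝ) ^ γ₅) →
      ∃ Γ' ⊆ Γ, IsTree N Γ' h P ∧
        ∀ Q ∈ Γ', N₀ ≤ h Q →
          (1 - ε) * ((ancestry h P Q).card : ℝ) ≤
            ((fertileAnc Γ' h P ((r : ℝ) ^ γ₃) Q).card : ℝ) := by
  intro ε hε0 hε1 γ₃ γ₄ γ₅ hγ₃0 h34 h45 h5e
  have h43 : (0:ℝ) < γ₄ - γ₃ := by linarith
  set ρ : ℝ := (γ₅ - γ₄) / (γ₄ - γ₃) with hρdef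
  have hρ0 : 0 < ρ := div_pos (by linarith) h43
  have hρmul : ρ * (γ₄ - γ₃) = γ₅ - γ₄ := div_mul_cancel₀ _ (ne_of_gt h43)
  have hρε : ρ < ε := by
    rw [hρdef, div_lt_iff₀ h43]
    linarith
  set ε' : ℝ := (ε + ρ) / 2 with hε'def
  have hε'0 : 0 < ε' := by rw [hε'def]; linarith
  have hρε' : ρ < ε' := by rw [hε'def]; linarith
  have hε'ε : ε' < ε := by rw [hε'def]; linarith
  set coef : ℝ := ε' * (γ₄ - γ₃) - (γ₅ - γ₄) with hcoefdef
  have hcoef : 0 < coef := by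
    rw [hcoefdef]
    nlinarith [hρmul, hρε', h43]
  set K : ℝ := (1 + ε') * Real.log 2 / coef with hKdef
  refine ⟨max 2 (⌈Real.exp K⌉₊ + 1), ?_⟩
  intro r hr V hV
  have hr2 : 2 ≤ r := le_trans (le_max_left _ _) hr
  have hr0 : 0 < r := by omega
  have hrpos : (0:ℝ) < (r:ℝ) := by exact_mod_cast hr0
  have hr2R : (2:ℝ) ≤ (r:ℝ) := by exact_mod_cast hr2
  set L := Real.log r with hLdef
  have hlog2 : (0:ℝ) < Real.log 2 := Real.log_pos (by norm_num)
  have hLlog2 : Real.log 2 ≤ L := Real.log_le_log (by norm_num) hr2R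
  have hKL : K ≤ L := by
    have h1 : Real.exp K ≤ (r:ℝ) := by
      have h2 : (⌈Real.exp K⌉₊ + 1 : ℕ) ≤ r := le_trans (le_max_right _ _) hr
      calc Real.exp K ≤ (⌈Real.exp K⌉₊ : ℝ) := Nat.le_ceil _
        _ ≤ ((⌈Real.exp K⌉₊ + 1 : ℕ) : ℝ) := by push_cast; linarith
        _ ≤ (r : ℝ) := by exact_mod_cast h2
    calc K = Real.log (Real.exp K) := (Real.log_exp K).symm
      _ ≤ L := Real.log_le_log (Real.exp_pos _) h1
  set lnB : ℝ := (γ₄ - γ₃) * L - Real.log 2 with hlnBdef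
  have hkey : (γ₅ - γ₄) * L + Real.log 2 ≤ ε' * lnB := by
    have h1 : coef * K = (1 + ε') * Real.log 2 := by
      rw [hKdef, mul_div_cancel₀ _ (ne_of_gt hcoef)]
    have h2 : coef * K ≤ coef * L := mul_le_mul_of_nonneg_left hKL hcoef.le
    have h3 : ε' * lnB - ((γ₅ - γ₄) * L + Real.log 2) =
        coef * L - (1 + ε') * Real.log 2 := by
      rw [hlnBdef, hcoefdef]; ring
    linarith
  have hlnApos : 0 < (γ₅ - γ₄) * L + Real.log 2 := by
    have : 0 < (γ₅ - γ₄) * L := mul_pos (by linarith) (lt_of_lt_of_le hlog2 hLlog2)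
    linarith
  have hlnB : 0 < lnB := by nlinarith [hkey, hlnApos, hε'0]
  refine ⟨⌈max 0 (-Real.log V) / ((ε - ε') * lnB)⌉₊ + 1, ?_⟩
  intro N hN α inst Γ h P hT hVc hcards
  obtain ⟨q₀, hq₀, huniq⟩ := hT.1
  obtain ⟨hq₀Γ, hq₀0⟩ := hq₀
  obtain ⟨m1, m2, m3, m4⟩ :=
    SubtreeAux.keep_main hT hr0 (le_of_lt hγ₃0) hcards N q₀ hq₀Γ (by omega)
  set Γ' := SubtreeAux.keep Γ h P r γ₃ γ₄ γ₅ N q₀ with hΓ'def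
  have hsubΓ : Γ' ⊆ Γ := fun x hx => (m1 x hx).1
  refine ⟨Γ', hsubΓ, ?_, ?_⟩
  · refine ⟨⟨q₀, ⟨SubtreeAux.self_mem_keep Γ h P r γ₃ γ₄ γ₅ N q₀, hq₀0⟩, ?_⟩, ?_, ?_, m3⟩
    · intro y hy
      exact huniq y ⟨hsubΓ hy.1, hy.2⟩
    · intro q hq
      exact hT.2.1 q (hsubΓ hq)
    · intro q hq hne
      have hneq : q ≠ q₀ := fun e => hne (e ▸ hq₀0)
      exact ⟨m2 q hq hneq, (hT.2.2.1 q (hsubΓ hq) hne).2⟩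
  · intro Q hQ hN₀Q
    obtain ⟨F, I, hFI, hHcQ, hbad⟩ := m4 Q hQ
    rw [hq₀0, Nat.sub_zero] at hFI hbad
    set n := h Q with hndef
    have hQΓ : Q ∈ Γ := hsubΓ hQ
    have hVroot : V ≤ SubtreeAux.Hc Γ h P r γ₄ N q₀ :=
      le_trans hVc (SubtreeAux.content_le_Hc hT hr0 γ₄ hq₀Γ hq₀0)
    set A : ℝ := (r:ℝ) ^ (γ₄ - γ₅) / 2 with hAdef
    set B : ℝ := (r:ℝ) ^ (γ₄ - γ₃) / 2 with hBdef
    have hApos : 0 < A := by rw [hAdef]; positivity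
    have hBpos : 0 < B := by rw [hBdef]; positivity
    have hVAB : V * A ^ F * B ^ I ≤ 1 := by
      have h1 : V * (A ^ F * B ^ I) ≤ SubtreeAux.Hc Γ h P r γ₄ N q₀ * (A ^ F * B ^ I) :=
        mul_le_mul_of_nonneg_right hVroot (by positivity)
      calc V * A ^ F * B ^ I = V * (A ^ F * B ^ I) := by ring
        _ ≤ SubtreeAux.Hc Γ h P r γ₄ N q₀ * (A ^ F * B ^ I) := h1
        _ = SubtreeAux.Hc Γ h P r γ₄ N q₀ * A ^ F * B ^ I := by ring
        _ ≤ SubtreeAux.Hc Γ h P r γ₄ (N - n) Q := hHcQ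
        _ ≤ 1 := SubtreeAux.Hc_le_one Γ h P r γ₄ _ _
    have hlog : Real.log V + (F : ℝ) * Real.log A + (I : ℝ) * Real.log B ≤ 0 := by
      have h0 := Real.log_nonpos (by positivity) hVAB
      rw [Real.log_mul (by positivity) (by positivity),
        Real.log_mul (by positivity) (by positivity),
        Real.log_pow, Real.log_pow] at h0
      push_cast at h0 ⊢
      linarith
    have hlogA : Real.log A = -((γ₅ - γ₄) * L + Real.log 2) := by
      rw [hAdef, Real.log_div (ne_of_gt (Real.rpow_pos_of_pos hrpos _)) two_ne_zero,
        Real.log_rpow hrpos, hLdef]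
      ring
    have hlogB : Real.log B = lnB := by
      rw [hBdef, Real.log_div (ne_of_gt (Real.rpow_pos_of_pos hrpos _)) two_ne_zero,
        Real.log_rpow hrpos, hlnBdef, hLdef]
    have hFn : (F : ℝ) ≤ (n : ℝ) := by exact_mod_cast (by omega : F ≤ n)
    have hIn : I ≤ n := by omega
    have hn0 : (0:ℝ) ≤ (n:ℝ) := Nat.cast_nonneg n
    have hstep1 : (I : ℝ) * lnB ≤ max 0 (-Real.log V) + (n : ℝ) * (ε' * lnB) := by
      have h2 : (I : ℝ) * lnB ≤ -Real.log V + (F : ℝ) * ((γ₅ - γ₄) * L + Real.log 2) := by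
        rw [← hlogB]
        rw [hlogA] at hlog
        linarith
      have h3 : (F : ℝ) * ((γ₅ - γ₄) * L + Real.log 2) ≤
          (n : ℝ) * ((γ₅ - γ₄) * L + Real.log 2) :=
        mul_le_mul_of_nonneg_right hFn hlnApos.le
      have h4 : (n : ℝ) * ((γ₅ - γ₄) * L + Real.log 2) ≤ (n : ℝ) * (ε' * lnB) :=
        mul_le_mul_of_nonneg_left hkey hn0
      have h5 : -Real.log V ≤ max 0 (-Real.log V) := le_max_right _ _
      linarith
    have hdpos : 0 < (ε - ε') * lnB := mul_pos (by linarith) hlnB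
    have hmax : max 0 (-Real.log V) ≤ (n : ℝ) * ((ε - ε') * lnB) := by
      have hceil : max 0 (-Real.log V) / ((ε - ε') * lnB) ≤ (n : ℝ) := by
        calc max 0 (-Real.log V) / ((ε - ε') * lnB)
            ≤ (⌈max 0 (-Real.log V) / ((ε - ε') * lnB)⌉₊ : ℝ) := Nat.le_ceil _
          _ ≤ ((⌈max 0 (-Real.log V) / ((ε - ε') * lnB)⌉₊ + 1 : ℕ) : ℝ) := by
              push_cast; linarith
          _ ≤ (n : ℝ) := by exact_mod_cast hN₀Q
      calc max 0 (-Real.log V) = max 0 (-Real.log V) / ((ε - ε') * lnB) * ((ε - ε') * lnB) := by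
            rw [div_mul_cancel₀ _ (ne_of_gt hdpos)]
        _ ≤ (n : ℝ) * ((ε - ε') * lnB) := mul_le_mul_of_nonneg_right hceil hdpos.le
    have hIεn : (I : ℝ) ≤ ε * (n : ℝ) := by
      have h6 : (I : ℝ) * lnB ≤ (ε * (n : ℝ)) * lnB := by nlinarith [hstep1, hmax]
      exact le_of_mul_le_mul_right h6 hlnB
    -- counting ancestors
    have hiterQ : ∀ k, k ≤ n → P^[k] Q ∈ Γ ∧ h (P^[k] Q) = n - k := fun k hk =>
      SubtreeAux.iter_mem hT hQΓ k hk
    have hinj : Set.InjOn (fun k => P^[k] Q) ↑(Finset.Icc 1 n) := by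
      intro k1 hk1 k2 hk2 he
      simp only [Finset.coe_Icc, Set.mem_Icc] at hk1 hk2
      have e1 := (hiterQ k1 hk1.2).2
      have e2 := (hiterQ k2 hk2.2).2
      simp only at he
      rw [he] at e1
      omega
    have hanc : (ancestry h P Q).card = n := by
      rw [ancestry, Finset.card_image_of_injOn hinj, Nat.card_Icc]
      omega
    have hfertcard : ((fertileAnc Γ' h P ((r:ℝ) ^ γ₃) Q).card : ℕ) =
        ((Finset.Icc 1 n).filter fun k =>
          (r:ℝ) ^ γ₃ ≤ ((children Γ' h P (P^[k] Q)).card : ℝ)).card := by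
      rw [fertileAnc, ancestry, Finset.filter_image]
      apply Finset.card_image_of_injOn
      exact hinj.mono (by exact_mod_cast Finset.filter_subset _ _)
    have hsplit := Finset.card_filter_add_card_filter_not
      (s := Finset.Icc 1 n)
      (p := fun k => (r:ℝ) ^ γ₃ ≤ ((children Γ' h P (P^[k] Q)).card : ℝ))
    rw [Nat.card_Icc] at hsplit
    have hbadI : ((Finset.Icc 1 n).filter fun k =>
        ¬ ((r:ℝ) ^ γ₃ ≤ ((children Γ' h P (P^[k] Q)).card : ℝ))).card ≤ I := hbad
    have hgood : n - I ≤ ((Finset.Icc 1 n).filter fun k =>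
        (r:ℝ) ^ γ₃ ≤ ((children Γ' h P (P^[k] Q)).card : ℝ)).card := by omega
    rw [hanc, hfertcard]
    have hIcast : ((Finset.Icc 1 n).filter fun k =>
        (r:ℝ) ^ γ₃ ≤ ((children Γ' h P (P^[k] Q)).card : ℝ)).card ≥ n - I := hgood
    have hcast2 : ((n : ℝ) - (I : ℝ)) ≤ (((Finset.Icc 1 n).filter fun k =>
        (r:ℝ) ^ γ₃ ≤ ((children Γ' h P (P^[k] Q)).card : ℝ)).card : ℝ) := by
      have := hgood
      have h7 : ((n - I : ℕ) : ℝ) = (n : ℝ) - (I : ℝ) := by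
        have : I ≤ n := hIn
        push_cast [Nat.cast_sub this]
        ring
      rw [← h7]
      exact_mod_cast hgood
    linarith
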